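/- arXiv:1902.11163 — 4 statements merged into one kernel-verified Lean document; each statement's English description precedes it below -/
import Mathlib

section
/- Let p ∈ (0,1), let n ≥ 1 be an integer, let S_1,…,S_n be i.i.d. random variables with P(S_l = m) = p^{m−1}(1−p) for integers m ≥ 1, and let M := max_{l=1,…,n} S_l. Then (log n)/(log(1/p)) ≤ E[M] ≤ 1 + (1 + log n)/(log(1/p)). -/
open MeasureTheory ProbabilityTheory
open scoped ENNReal

section AuxReal

open Finset intervalIntegral

noncomputable def phiAux (n : ℕ) : ℝ → ℝ := fun u => ∑ j ∈ Finset.range n, (1 - u) ^ j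

lemma phiAux_cont (n : ℕ) : Continuous (phiAux n) := by
  unfold phiAux
  exact continuous_finset_sum _ fun j _ => ((continuous_const.sub continuous_id).pow j)

lemma phiAux_id (n : ℕ) (u : ℝ) : u * phiAux n u = 1 - (1 - u) ^ n := by
  unfold phiAux
  linear_combination -geom_sum_mul (1 - u) n

lemma F_mono (n : ℕ) {A B : ℝ} (hA : 0 ≤ A) (hAB : A ≤ B) (hB : B ≤ 1) :
    1 - (1 - A) ^ n ≤ 1 - (1 - B) ^ n := by
  have : (1 - B) ^ n ≤ (1 - A) ^ n :=
    pow_le_pow_left₀ (by linarith) (by linarith) n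
  linarith

lemma integral_phi (n : ℕ) (A : ℝ) :
    ∫ u in A..1, phiAux n u = ∑ j ∈ range n, (1 - A) ^ (j + 1) / (j + 1) := by
  unfold phiAux
  rw [intervalIntegral.integral_finset_sum]
  · refine Finset.sum_congr rfl fun j _ => ?_
    have h1 : (∫ u in A..1, (1 - u) ^ j) = ∫ x in (1 - (1:ℝ))..(1 - A), x ^ j := by
      simpa using intervalIntegral.integral_comp_sub_left (a := A) (b := 1)
        (fun x => x ^ j) 1
    rw [h1]
    simp [integral_pow]
  · exact fun j _ => ((continuous_const.sub continuous_id).pow j).intervalIntegrable _ _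

lemma one_div_intable {A B : ℝ} (hA : 0 < A) (hAB : A ≤ B) :
    IntervalIntegrable (fun u : ℝ => 1 / u) MeasureTheory.volume A B := by
  apply ContinuousOn.intervalIntegrable
  apply ContinuousOn.div continuousOn_const continuousOn_id
  intro x hx
  rw [Set.uIcc_of_le hAB] at hx
  exact ne_of_gt (lt_of_lt_of_le hA hx.1)

lemma log_ratio {p : ℝ} (hp0 : 0 < p) (hp1 : p < 1) (k : ℕ) :
    ∫ u in (p ^ (k+1))..(p ^ k), 1 / u = Real.log (1 / p) := by
  have hA0 : (0:ℝ) < p ^ (k+1) := pow_pos hp0 _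
  have hAB : p ^ (k+1) ≤ p ^ k := pow_le_pow_of_le_one hp0.le hp1.le (by omega)
  rw [integral_one_div (by
    rw [Set.uIcc_of_le hAB]
    intro h
    exact absurd h.1 (by simp [hA0.not_ge]))]
  congr 1
  rw [pow_succ]
  field_simp

lemma interval_bound {p : ℝ} (hp0 : 0 < p) (hp1 : p < 1) (n k : ℕ) :
    (1 - (1 - p ^ (k+1)) ^ n) * Real.log (1 / p)
      ≤ ∫ u in (p ^ (k+1))..(p ^ k), phiAux n u ∧
    ∫ u in (p ^ (k+1))..(p ^ k), phiAux n u
      ≤ (1 - (1 - p ^ k) ^ n) * Real.log (1 / p) := by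
  set A := p ^ (k+1) with hA
  set B := p ^ k with hB
  have hA0 : 0 < A := pow_pos hp0 _
  have hB1 : B ≤ 1 := pow_le_one₀ hp0.le hp1.le
  have hAB : A ≤ B := pow_le_pow_of_le_one hp0.le hp1.le (by omega)
  constructor
  · have key : ∫ u in A..B, (1 - (1 - A) ^ n) * (1 / u) ≤ ∫ u in A..B, phiAux n u := by
      apply intervalIntegral.integral_mono_on hAB
        ((one_div_intable hA0 hAB).const_mul _)
        ((phiAux_cont n).intervalIntegrable _ _)
      intro u hu
      have hu0 : 0 < u := lt_of_lt_of_le hA0 hu.1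
      have h1 : 1 - (1 - A) ^ n ≤ u * phiAux n u := by
        rw [phiAux_id]
        exact F_mono n hA0.le hu.1 (le_trans hu.2 hB1)
      rw [mul_one_div, div_le_iff₀ hu0]
      linarith
    rw [intervalIntegral.integral_const_mul, log_ratio hp0 hp1 k] at key
    exact key
  · have key : ∫ u in A..B, phiAux n u ≤ ∫ u in A..B, (1 - (1 - B) ^ n) * (1 / u) := by
      apply intervalIntegral.integral_mono_on hAB
        ((phiAux_cont n).intervalIntegrable _ _)
        ((one_div_intable hA0 hAB).const_mul _)
      intro u hu
      have hu0 : 0 < u := lt_of_lt_of_le hA0 hu.1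
      have h1 : u * phiAux n u ≤ 1 - (1 - B) ^ n := by
        rw [phiAux_id]
        exact F_mono n hu0.le hu.2 hB1
      rw [mul_one_div, le_div_iff₀ hu0]
      linarith
    rw [intervalIntegral.integral_const_mul, log_ratio hp0 hp1 k] at key
    exact key

lemma telescope {p : ℝ} (hp0 : 0 < p) (hp1 : p < 1) (n : ℕ) (N : ℕ) :
    ∫ u in (p ^ N)..1, phiAux n u
      = ∑ k ∈ range N, ∫ u in (p ^ (k+1))..(p ^ k), phiAux n u := by
  induction N with
  | zero => simp
  | succ N ih =>
    rw [Finset.sum_range_succ, ← ih]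
    have h := intervalIntegral.integral_add_adjacent_intervals
      (a := p ^ (N+1)) (b := p ^ N) (c := 1) (f := phiAux n) (μ := MeasureTheory.volume)
      ((phiAux_cont n).intervalIntegrable _ _) ((phiAux_cont n).intervalIntegrable _ _)
    linarith

lemma harmonic_cast (n : ℕ) : (harmonic n : ℝ) = ∑ j ∈ range n, 1 / ((j:ℝ) + 1) := by
  unfold harmonic
  push_cast
  simp [one_div]

lemma integral_phi_bounds (n : ℕ) {A : ℝ} (hA0 : 0 ≤ A) (hA1 : A ≤ 1) :
    (harmonic n : ℝ) - n * A ≤ ∫ u in A..1, phiAux n u ∧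
    ∫ u in A..1, phiAux n u ≤ (harmonic n : ℝ) := by
  rw [integral_phi, harmonic_cast]
  constructor
  · have h : ∀ j ∈ range n, 1 / ((j:ℝ) + 1) - A ≤ (1 - A) ^ (j + 1) / (j + 1) := by
      intro j _
      have hj : (0:ℝ) < (j:ℝ) + 1 := by positivity
      have hb : 1 + ((j:ℝ) + 1) * (-A) ≤ (1 + (-A)) ^ (j + 1) := by
        have := one_add_mul_le_pow (a := -A) (by linarith) (j + 1)
        simpa using this
      have hcancel : (1 / ((j:ℝ)+1)) * ((j:ℝ)+1) = 1 := by field_simp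
      have hb' : 1 - ((j:ℝ)+1) * A ≤ (1 - A) ^ (j+1) := by
        rw [show (1:ℝ) - A = 1 + -A by ring]
        linarith
      rw [le_div_iff₀ hj]
      nlinarith [hb', hcancel]
    calc ∑ j ∈ range n, 1 / ((j:ℝ) + 1) - n * A
        = ∑ j ∈ range n, (1 / ((j:ℝ) + 1) - A) := by
          rw [Finset.sum_sub_distrib]
          simp [Finset.sum_const, mul_comm]
      _ ≤ _ := Finset.sum_le_sum h
  · apply Finset.sum_le_sum
    intro j _
    have hj : (0:ℝ) < (j:ℝ) + 1 := by positivity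
    rw [div_le_div_iff_of_pos_right hj]
    exact pow_le_one₀ (by linarith) (by linarith)

lemma tsum_bounds {p : ℝ} (hp0 : 0 < p) (hp1 : p < 1) (n : ℕ) :
    Summable (fun k : ℕ => 1 - (1 - p ^ k) ^ n) ∧
    (harmonic n : ℝ) / Real.log (1/p) ≤ (∑' k : ℕ, (1 - (1 - p ^ k) ^ n)) ∧
    (∑' k : ℕ, (1 - (1 - p ^ k) ^ n)) ≤ 1 + (harmonic n : ℝ) / Real.log (1/p) := by
  set c := Real.log (1/p) with hc_def
  have hc : 0 < c := Real.log_pos ((one_lt_div hp0).2 (by linarith))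
  set a : ℕ → ℝ := fun k => 1 - (1 - p ^ k) ^ n with ha_def
  have hpk : ∀ k : ℕ, 0 < p ^ k ∧ p ^ k ≤ 1 :=
    fun k => ⟨pow_pos hp0 k, pow_le_one₀ hp0.le hp1.le⟩
  have ha0 : ∀ k, 0 ≤ a k := by
    intro k
    have := pow_le_one₀ (a := 1 - p ^ k) (by linarith [(hpk k).1, (hpk k).2]) (by linarith [(hpk k).1, (hpk k).2]) (n := n)
    simp only [ha_def]
    linarith
  have ha1 : ∀ k, a k ≤ 1 := by
    intro k
    have := pow_nonneg (a := 1 - p ^ k) (by linarith [(hpk k).2]) n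
    simp only [ha_def]
    linarith
  have partial_ub : ∀ N, ∑ k ∈ range N, a (k+1) ≤ (harmonic n : ℝ) / c := by
    intro N
    rw [le_div_iff₀ hc]
    calc (∑ k ∈ range N, a (k+1)) * c = ∑ k ∈ range N, a (k+1) * c := Finset.sum_mul (range N) (fun k => a (k+1)) c
      _ ≤ ∑ k ∈ range N, ∫ u in (p ^ (k+1))..(p ^ k), phiAux n u :=
          Finset.sum_le_sum fun k _ => (interval_bound hp0 hp1 n k).1
      _ = ∫ u in (p ^ N)..1, phiAux n u := (telescope hp0 hp1 n N).symm
      _ ≤ (harmonic n : ℝ) := (integral_phi_bounds n (hpk N).1.le (hpk N).2).2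
  have partial_full : ∀ N, ∑ k ∈ range N, a k ≤ 1 + (harmonic n : ℝ) / c := by
    intro N
    have h1 : ∑ k ∈ range N, a k ≤ ∑ k ∈ range (N+1), a k :=
      Finset.sum_le_sum_of_subset_of_nonneg (Finset.range_subset_range.2 (by omega))
        (fun k _ _ => ha0 k)
    rw [Finset.sum_range_succ'] at h1
    calc ∑ k ∈ range N, a k ≤ (∑ k ∈ range N, a (k+1)) + a 0 := h1
      _ ≤ (harmonic n : ℝ) / c + 1 := add_le_add (partial_ub N) (ha1 0)
      _ = 1 + (harmonic n : ℝ) / c := by ring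
  have hsum : Summable a := summable_of_sum_range_le ha0 partial_full
  refine ⟨hsum, ?_, Summable.tsum_le_of_sum_range_le hsum partial_full⟩
  have partial_lb : ∀ N, (harmonic n : ℝ) - n * p ^ N ≤ c * ∑ k ∈ range N, a k := by
    intro N
    calc (harmonic n : ℝ) - n * p ^ N
        ≤ ∫ u in (p ^ N)..1, phiAux n u := (integral_phi_bounds n (hpk N).1.le (hpk N).2).1
      _ = ∑ k ∈ range N, ∫ u in (p ^ (k+1))..(p ^ k), phiAux n u := telescope hp0 hp1 n N
      _ ≤ ∑ k ∈ range N, a k * c := Finset.sum_le_sum fun k _ => (interval_bound hp0 hp1 n k).2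
      _ = c * ∑ k ∈ range N, a k := by rw [← Finset.sum_mul]; ring
  have hl : Filter.Tendsto (fun N => (harmonic n : ℝ) - n * p ^ N)
      Filter.atTop (nhds (harmonic n)) := by
    have := (tendsto_pow_atTop_nhds_zero_of_lt_one hp0.le hp1).const_mul (n : ℝ)
    simpa using (tendsto_const_nhds.sub this)
  have hr : Filter.Tendsto (fun N => c * ∑ k ∈ range N, a k)
      Filter.atTop (nhds (c * ∑' k, a k)) :=
    hsum.hasSum.tendsto_sum_nat.const_mul c
  have key : (harmonic n : ℝ) ≤ c * ∑' k, a k :=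
    le_of_tendsto_of_tendsto' hl hr partial_lb
  rw [div_le_iff₀ hc]
  linarith

end AuxReal

/-- If `S₁,…,Sₙ` are i.i.d. geometric random variables on
`{1,2,…}` with success probability `1−p`, and `M = max_l S_l`, then
`log n / log(1/p) ≤ E[M] ≤ 1 + (1 + log n)/log(1/p)`. -/
theorem expected_max_geometric_bounds
    {Ω : Type*} [MeasurableSpace Ω] (P : Measure Ω) [IsProbabilityMeasure P]
    (p : ℝ) (hp0 : 0 < p) (hp1 : p < 1) (n : ℕ) (hn : 1 ≤ n)
    (S : Fin n → Ω → ℕ) (hmeas : ∀ l, Measurable (S l))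
    (hindep : iIndepFun S P)
    (hdist : ∀ l (m : ℕ), 1 ≤ m →
      P {ω | S l ω = m} = ENNReal.ofReal (p ^ (m - 1) * (1 - p))) :
    Real.log n / Real.log (1 / p) ≤
        ∫ ω, ((Finset.univ.sup fun l => S l ω : ℕ) : ℝ) ∂P ∧
      ∫ ω, ((Finset.univ.sup fun l => S l ω : ℕ) : ℝ) ∂P ≤
        1 + (1 + Real.log n) / Real.log (1 / p) := by
  have hc : 0 < Real.log (1/p) := Real.log_pos ((one_lt_div hp0).2 (by linarith))
  have hNe : Nonempty (Fin n) := ⟨⟨0, by omega⟩⟩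
  set M : Ω → ℕ := fun ω => Finset.univ.sup fun l => S l ω with hM_def
  have hMmeas : Measurable M := by
    have h1 : Measurable (Finset.univ.sup' (Finset.univ_nonempty (α := Fin n)) S) :=
      Finset.measurable_sup' _ (fun l _ => hmeas l)
    have h2 : M = Finset.univ.sup' (Finset.univ_nonempty (α := Fin n)) S := by
      funext ω
      rw [Finset.sup'_apply, Finset.sup'_eq_sup]
    rw [h2]; exact h1
  have hpk : ∀ k : ℕ, 0 < p ^ k ∧ p ^ k ≤ 1 :=
    fun k => ⟨pow_pos hp0 k, pow_le_one₀ hp0.le hp1.le⟩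
  -- P(S l = 0) = 0
  have hzero : ∀ l, P {ω | S l ω = 0} = 0 := by
    intro l
    have hms : ∀ m : ℕ, MeasurableSet {ω | S l ω = m} :=
      fun m => (hmeas l) (measurableSet_singleton m)
    have hdisj : Pairwise (Function.onFun Disjoint (fun m : ℕ => {ω | S l ω = m})) := by
      intro i j hij
      simp only [Function.onFun, Set.disjoint_left]
      rintro ω hi hj
      exact hij (hi ▸ hj ▸ rfl)
    have hdisj' : Pairwise (Function.onFun Disjoint (fun m : ℕ => {ω | S l ω = m + 1})) := by
      intro i j hij
      simp only [Function.onFun, Set.disjoint_left]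
      rintro ω hi hj
      rw [Set.mem_setOf_eq] at hi hj
      omega
    have hcompl : P {ω | S l ω = 0}ᶜ = 1 := by
      have hset : {ω | S l ω = 0}ᶜ = ⋃ m : ℕ, {ω | S l ω = m + 1} := by
        ext ω
        simp only [Set.mem_compl_iff, Set.mem_setOf_eq, Set.mem_iUnion]
        exact ⟨fun h => ⟨S l ω - 1, by omega⟩, fun ⟨m, hm⟩ => by omega⟩
      rw [hset, measure_iUnion hdisj' (fun m => hms (m+1))]
      have he : ∀ m : ℕ, P {ω | S l ω = m + 1} = ENNReal.ofReal (p ^ m * (1 - p)) := by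
        intro m
        simpa using hdist l (m+1) (by omega)
      rw [tsum_congr he,
        ← ENNReal.ofReal_tsum_of_nonneg
          (fun m => mul_nonneg (pow_nonneg hp0.le m) (by linarith))
          ((summable_geometric_of_lt_one hp0.le hp1).mul_right _),
        tsum_mul_right, tsum_geometric_of_lt_one hp0.le hp1, ← ENNReal.ofReal_one]
      congr 1
      rw [inv_mul_cancel₀ (ne_of_gt (by linarith : (0:ℝ) < 1 - p))]
    have h3 : P {ω | S l ω = 0} + P {ω | S l ω = 0}ᶜ = 1 := by
      rw [← measure_univ (μ := P)]
      exact measure_add_measure_compl (hms 0)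
    rw [hcompl] at h3
    have h4 := ENNReal.add_sub_cancel_right
      (a := P {ω | S l ω = 0}) (b := (1:ℝ≥0∞)) ENNReal.one_ne_top
    rw [h3] at h4
    simpa using h4.symm
  -- cdf of S l
  have hcdf : ∀ l (k : ℕ), P (S l ⁻¹' Set.Iic k) = ENNReal.ofReal (1 - p ^ k) := by
    intro l k
    have hset : S l ⁻¹' Set.Iic k = ⋃ m ∈ Finset.range (k+1), {ω | S l ω = m} := by
      ext ω; simp [Nat.lt_succ_iff]
    have hms : ∀ m : ℕ, MeasurableSet {ω | S l ω = m} :=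
      fun m => (hmeas l) (measurableSet_singleton m)
    rw [hset, measure_biUnion_finset ?_ (fun m _ => hms m)]
    · rw [Finset.sum_range_succ']
      have he : ∀ m ∈ Finset.range k, P {ω | S l ω = m + 1} = ENNReal.ofReal (p ^ m * (1 - p)) := by
        intro m _
        simpa using hdist l (m+1) (by omega)
      rw [Finset.sum_congr rfl he, hzero l, add_zero,
        ← ENNReal.ofReal_sum_of_nonneg (fun m _ => mul_nonneg (pow_nonneg hp0.le m) (by linarith))]
      congr 1
      rw [← Finset.sum_mul, geom_sum_eq hp1.ne]
      have hne : p - 1 ≠ 0 := by linarith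
      field_simp
      ring
    · intro i _ j _ hij
      simp only [Function.onFun, Set.disjoint_left]
      rintro ω hi hj
      exact hij (hi ▸ hj ▸ rfl)
  -- cdf of M
  have hMcdf : ∀ k : ℕ, P {ω | M ω ≤ k} = ENNReal.ofReal ((1 - p ^ k) ^ n) := by
    intro k
    have hset : {ω | M ω ≤ k} = ⋂ l, S l ⁻¹' Set.Iic k := by
      ext ω
      simp [hM_def, Finset.sup_le_iff, Set.mem_iInter]
    rw [hset, hindep.meas_iInter (fun l => ⟨Set.Iic k, trivial, rfl⟩)]
    rw [Finset.prod_congr rfl (fun l _ => hcdf l k), Finset.prod_const,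
      ← ENNReal.ofReal_pow (by linarith [(hpk k).2])]
    simp
  -- tail of M
  have htail : ∀ k : ℕ, P {ω | k < M ω} = ENNReal.ofReal (1 - (1 - p ^ k) ^ n) := by
    intro k
    have hset : {ω | k < M ω} = {ω | M ω ≤ k}ᶜ := by
      ext ω; simp
    have hm : MeasurableSet {ω | M ω ≤ k} := hMmeas measurableSet_Iic
    rw [hset, measure_compl hm (measure_ne_top P _), hMcdf k, measure_univ,
      ENNReal.ofReal_sub _ (pow_nonneg (by linarith [(hpk k).2]) n), ENNReal.ofReal_one]
  -- lintegral formula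
  have hlint : ∫⁻ ω, (M ω : ℝ≥0∞) ∂P = ∑' k : ℕ, P {ω | k < M ω} := by
    have hpt : ∀ ω, (M ω : ℝ≥0∞)
        = ∑' k : ℕ, Set.indicator {ω' | k < M ω'} (fun _ => (1:ℝ≥0∞)) ω := by
      intro ω
      rw [tsum_eq_sum (s := Finset.range (M ω)) ?_]
      · have h2 : ∀ k ∈ Finset.range (M ω),
            Set.indicator {ω' | k < M ω'} (fun _ => (1:ℝ≥0∞)) ω = 1 := by
          intro k hk
          rw [Set.indicator_of_mem]
          exact Finset.mem_range.1 hk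
        rw [Finset.sum_congr rfl h2]
        simp
      · intro k hk
        have hnk : ω ∉ {ω' | k < M ω'} := by
          simp only [Set.mem_setOf_eq, not_lt]
          simpa using hk
        exact Set.indicator_of_notMem hnk _
    calc ∫⁻ ω, (M ω : ℝ≥0∞) ∂P
        = ∫⁻ ω, ∑' k : ℕ, Set.indicator {ω' | k < M ω'} (fun _ => (1:ℝ≥0∞)) ω ∂P :=
          lintegral_congr hpt
      _ = ∑' k : ℕ, ∫⁻ ω, Set.indicator {ω' | k < M ω'} (fun _ => (1:ℝ≥0∞)) ω ∂P :=
          lintegral_tsum fun k =>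
            (measurable_const.indicator (hMmeas measurableSet_Ioi)).aemeasurable
      _ = ∑' k : ℕ, P {ω | k < M ω} := by
          refine tsum_congr fun k => ?_
          exact lintegral_indicator_one (hMmeas measurableSet_Ioi)
  -- put things together
  obtain ⟨hsummable, hlow, hupp⟩ := tsum_bounds hp0 hp1 n
  set T := ∑' k : ℕ, (1 - (1 - p ^ k) ^ n) with hT_def
  have hterm0 : ∀ k : ℕ, 0 ≤ 1 - (1 - p ^ k) ^ n := by
    intro k
    have := pow_le_one₀ (a := 1 - p ^ k) (by linarith [(hpk k).1, (hpk k).2]) (by linarith [(hpk k).1, (hpk k).2]) (n := n)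
    linarith
  have hT0 : 0 ≤ T := tsum_nonneg hterm0
  have hlint2 : ∫⁻ ω, (M ω : ℝ≥0∞) ∂P = ENNReal.ofReal T := by
    rw [hlint, tsum_congr htail, ← ENNReal.ofReal_tsum_of_nonneg hterm0 hsummable]
  have hint : ∫ ω, (M ω : ℝ) ∂P = T := by
    have hsm : AEStronglyMeasurable (fun ω => (M ω : ℝ)) P :=
      (Measurable.comp measurable_from_nat hMmeas).aestronglyMeasurable
    rw [integral_eq_lintegral_of_nonneg_ae
      (Filter.Eventually.of_forall fun ω => Nat.cast_nonneg (M ω)) hsm]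
    simp only [ENNReal.ofReal_natCast]
    rw [hlint2, ENNReal.toReal_ofReal hT0]
  have hlogn : Real.log n ≤ (harmonic n : ℝ) := by
    have h1 := log_add_one_le_harmonic n
    have h2 : Real.log n ≤ Real.log ((n : ℝ) + 1) :=
      Real.log_le_log (by exact_mod_cast hn) (by linarith)
    push_cast at h1
    linarith
  have hharm : (harmonic n : ℝ) ≤ 1 + Real.log n := harmonic_le_one_add_log n
  constructor
  · calc Real.log n / Real.log (1/p)
        ≤ (harmonic n : ℝ) / Real.log (1/p) := by gcongr
      _ ≤ T := hlow
      _ = ∫ ω, (M ω : ℝ) ∂P := hint.symm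
  · calc ∫ ω, (M ω : ℝ) ∂P = T := hint
      _ ≤ 1 + (harmonic n : ℝ) / Real.log (1/p) := hupp
      _ ≤ 1 + (1 + Real.log n) / Real.log (1/p) := by gcongr
end

section
/- For every p ∈ (0,1) and every integer n ≥ 1, ∫₀^∞ (1 − (1 − p^z)^n) dz = (1/log(1/p)) · Σ_{i=1}^n (1/i), where the integral is over z ∈ [0,∞) and p^z = exp(z · log p). -/
open MeasureTheory Real Set Filter Topology

private lemma aux_cont (p : ℝ) (hp0 : 0 < p) : Continuous fun z : ℝ => p ^ z := by
  have : (fun z : ℝ => p ^ z) = fun z => Real.exp (Real.log p * z) := by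
    funext z; rw [Real.rpow_def_of_pos hp0]
  rw [this]; exact (continuous_const.mul continuous_id).rexp

private lemma aux_integrable (p : ℝ) (hp0 : 0 < p) (hp1 : p < 1) (k : ℕ) :
    IntegrableOn (fun z => p ^ z * (1 - p ^ z) ^ k) (Ioi (0:ℝ)) := by
  have hc : 0 < -Real.log p := by
    have := Real.log_neg hp0 hp1; linarith
  have hexp : IntegrableOn (fun z => Real.exp (-(-Real.log p) * z)) (Ioi (0:ℝ)) :=
    exp_neg_integrableOn_Ioi 0 hc
  have heq : ∀ z : ℝ, p ^ z = Real.exp (-(-Real.log p) * z) := by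
    intro z; rw [Real.rpow_def_of_pos hp0]; ring_nf
  apply Integrable.mono' hexp
  · exact (((aux_cont p hp0)).mul ((continuous_const.sub (aux_cont p hp0)).pow k)).aestronglyMeasurable
  · filter_upwards [ae_restrict_mem measurableSet_Ioi] with z hz
    have hz0 : (0:ℝ) < z := hz
    have hpz0 : 0 < p ^ z := Real.rpow_pos_of_pos hp0 z
    have hpz1 : p ^ z ≤ 1 := Real.rpow_le_one hp0.le hp1.le hz0.le
    rw [Real.norm_eq_abs, abs_of_nonneg (mul_nonneg hpz0.le (pow_nonneg (by linarith) k)), ← heq]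
    calc p^z * (1-p^z)^k ≤ p^z * 1 :=
          mul_le_mul_of_nonneg_left (pow_le_one₀ (by linarith) (by linarith)) hpz0.le
      _ = p^z := mul_one _

private lemma aux_deriv (p : ℝ) (hp0 : 0 < p) (x : ℝ) :
    HasDerivAt (fun z : ℝ => p ^ z) (Real.log p * p ^ x) x := by
  have h : HasDerivAt (fun z : ℝ => Real.exp (Real.log p * z))
      (Real.log p * Real.exp (Real.log p * x)) x := by
    simpa [mul_comm] using ((hasDerivAt_id x).const_mul (Real.log p)).exp
  have he : (fun z : ℝ => p ^ z) = fun z => Real.exp (Real.log p * z) := by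
    funext z; rw [Real.rpow_def_of_pos hp0]
  rw [he, Real.rpow_def_of_pos hp0]; exact h

private lemma aux_integral (p : ℝ) (hp0 : 0 < p) (hp1 : p < 1) (k : ℕ) :
    ∫ z in Ioi (0:ℝ), p ^ z * (1 - p ^ z) ^ k
      = 1 / ((-Real.log p) * (k + 1)) := by
  have hc : 0 < -Real.log p := by
    have := Real.log_neg hp0 hp1; linarith
  set c : ℝ := -Real.log p with hcdef
  set F : ℝ → ℝ := fun z => (1 - p ^ z) ^ (k + 1) / ((k + 1) * c) with hF
  have hderiv : ∀ x ∈ Ioi (0:ℝ), HasDerivAt F (p ^ x * (1 - p ^ x) ^ k) x := by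
    intro x _
    have h1 : HasDerivAt (fun z : ℝ => 1 - p ^ z) (-(Real.log p * p ^ x)) x :=
      (aux_deriv p hp0 x).const_sub 1
    have h2 : HasDerivAt (fun z : ℝ => (1 - p ^ z) ^ (k + 1))
        ((k + 1 : ℕ) * (1 - p ^ x) ^ k * (-(Real.log p * p ^ x))) x := by
      simpa using h1.fun_pow (k + 1)
    have h3 := h2.div_const ((k + 1) * c)
    refine h3.congr_deriv ?_
    have hk : ((k : ℝ) + 1) ≠ 0 := by positivity
    have hlp : Real.log p ≠ 0 := ne_of_lt (by linarith)
    rw [hcdef]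
    push_cast
    field_simp
  have hcont : ContinuousWithinAt F (Ici (0:ℝ)) 0 := by
    apply Continuous.continuousWithinAt
    exact ((continuous_const.sub (aux_cont p hp0)).pow (k+1)).div_const _
  have htend : Tendsto F atTop (𝓝 (1 / ((k + 1) * c))) := by
    have hp' : Tendsto (fun z : ℝ => p ^ z) atTop (𝓝 0) :=
      tendsto_rpow_atTop_of_base_lt_one p (by linarith) hp1
    have : Tendsto (fun z : ℝ => (1 - p ^ z) ^ (k + 1) / ((k + 1) * c)) atTop
        (𝓝 ((1 - 0) ^ (k + 1) / ((k + 1) * c))) :=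
      (((tendsto_const_nhds.sub hp').pow (k + 1)).div_const _)
    simpa using this
  have := integral_Ioi_of_hasDerivAt_of_tendsto hcont hderiv
    (aux_integrable p hp0 hp1 k) htend
  rw [this]
  have : F 0 = 0 := by simp [hF]
  rw [this, sub_zero, mul_comm]

/-- For `p ∈ (0,1)` and `n ≥ 1`,
`∫₀^∞ (1 − (1 − p^z)^n) dz = (1/log(1/p)) · Σ_{i=1}^n 1/i`. -/
theorem integral_one_sub_one_sub_rpow_pow
    (p : ℝ) (hp0 : 0 < p) (hp1 : p < 1) (n : ℕ) (hn : 1 ≤ n) :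
    ∫ z in Set.Ioi (0 : ℝ), (1 - (1 - p ^ z) ^ n) =
      (1 / Real.log (1 / p)) * ∑ i ∈ Finset.range n, (1 : ℝ) / (i + 1) := by
  have hc : 0 < -Real.log p := by
    have := Real.log_neg hp0 hp1; linarith
  have hsum : ∀ z : ℝ, (1 : ℝ) - (1 - p ^ z) ^ n
      = ∑ k ∈ Finset.range n, p ^ z * (1 - p ^ z) ^ k := by
    intro z
    rw [← Finset.mul_sum]
    have h := geom_sum_mul (1 - p ^ z) n
    linear_combination h
  simp_rw [hsum]
  rw [integral_finset_sum _ (fun k _ => aux_integrable p hp0 hp1 k)]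
  rw [Finset.mul_sum]
  refine Finset.sum_congr rfl fun k _ => ?_
  rw [aux_integral p hp0 hp1 k, one_div, Real.log_div one_ne_zero hp0.ne', Real.log_one]
  field_simp
  ring
end

section
/- Let f : ℝ^n → ℝ be differentiable, μ-strongly convex, with L-Lipschitz gradient (0 < μ ≤ L). For each x ∈ ℝ^n let c(x) denote the unique minimizer of the map c ↦ f(c) + ⟨x, c⟩. Then for all x₁, x₂ ∈ ℝ^n: (i) ⟨c(x₁) − c(x₂), x₂ − x₁⟩ ≥ (1/L) ‖x₁ − x₂‖₂², and (ii) ‖c(x₁) − c(x₂)‖₂ ≤ (1/μ) ‖x₁ − x₂‖₂. -/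
open scoped RealInnerProductSpace Topology
open Filter Set

variable {E : Type*} [NormedAddCommGroup E] [InnerProductSpace ℝ E] [CompleteSpace E]

lemma aux_line_deriv {f : E → ℝ} (x v : E) {t : ℝ} {xg : E}
    (hx : HasGradientAt f xg (x + t • v)) :
    HasDerivAt (fun s : ℝ => f (x + s • v)) ⟪xg, v⟫ t := by
  have hline : HasDerivAt (fun s : ℝ => x + s • v) v t := by
    simpa using ((hasDerivAt_id t).smul_const v).const_add x
  have := (hx.hasFDerivAt.comp_hasDerivAt t hline)
  simpa [InnerProductSpace.toDual_apply_apply, Function.comp_def] using this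

lemma aux_first_order {f : E → ℝ} (hf : ConvexOn ℝ Set.univ f)
    {x : E} {xg : E} (hx : HasGradientAt f xg x) (y : E) :
    f x + ⟪xg, y - x⟫ ≤ f y := by
  have hd : HasDerivAt (fun s : ℝ => f (x + s • (y - x))) ⟪xg, y - x⟫ 0 :=
    aux_line_deriv x (y - x) (by simpa using hx)
  have hslope : Tendsto (slope (fun s : ℝ => f (x + s • (y - x))) 0) (𝓝[>] 0)
      (𝓝 ⟪xg, y - x⟫) :=
    (hasDerivAt_iff_tendsto_slope.mp hd).mono_left
      (nhdsWithin_mono 0 fun t ht => ne_of_gt ht)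
  have hbound : ∀ᶠ t in 𝓝[>] (0:ℝ),
      slope (fun s : ℝ => f (x + s • (y - x))) 0 t ≤ f y - f x := by
    filter_upwards [Ioo_mem_nhdsGT_of_mem (by norm_num : (0:ℝ) ∈ Ico (0:ℝ) 1)] with t ht
    have h1 : x + t • (y - x) = (1 - t) • x + t • y := by
      simp [smul_sub, sub_smul]; abel
    have hc := hf.2 (mem_univ x) (mem_univ y) (by linarith [ht.2] : (0:ℝ) ≤ 1 - t)
      ht.1.le (by ring)
    simp only [smul_eq_mul] at hc
    rw [slope_def_field]
    simp only [sub_zero, zero_smul, add_zero]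
    rw [div_le_iff₀ ht.1, h1]
    nlinarith [hc]
  have := le_of_tendsto hslope hbound
  linarith

/-- the descent lemma for a function with Lipschitz gradient -/
lemma aux_descent {f : E → ℝ} {g : E → E} {L : ℝ} (hL : 0 < L)
    (hgrad : ∀ x, HasGradientAt f (g x) x)
    (hlip : ∀ x y, ‖g x - g y‖ ≤ L * ‖x - y‖) (x y : E) :
    f y ≤ f x + ⟪g x, y - x⟫ + L / 2 * ‖y - x‖ ^ 2 := by
  set v := y - x with hv
  set ψ : ℝ → ℝ := fun t => f (x + t • v) - t * ⟪g x, v⟫ - L / 2 * t ^ 2 * ‖v‖ ^ 2 with hψ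
  have hd : ∀ t : ℝ, HasDerivAt ψ (⟪g (x + t • v), v⟫ - ⟪g x, v⟫ - L * t * ‖v‖ ^ 2) t := by
    intro t
    have h1 : HasDerivAt (fun s : ℝ => f (x + s • v)) ⟪g (x + t • v), v⟫ t :=
      aux_line_deriv x v (hgrad _)
    have h2 : HasDerivAt (fun s : ℝ => s * ⟪g x, v⟫) ⟪g x, v⟫ t := by
      simpa using (hasDerivAt_id t).mul_const ⟪g x, v⟫
    have h3 : HasDerivAt (fun s : ℝ => L / 2 * s ^ 2 * ‖v‖ ^ 2) (L * t * ‖v‖ ^ 2) t := by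
      have := ((hasDerivAt_pow 2 t).const_mul (L / 2)).mul_const (‖v‖ ^ 2)
      exact this.congr_deriv (by rw [show (2:ℕ) - 1 = 1 from rfl, pow_one]; push_cast; ring)
    exact (h1.sub h2).sub h3
  have hmono : AntitoneOn ψ (Icc (0:ℝ) 1) := by
    apply antitoneOn_of_deriv_nonpos (convex_Icc 0 1)
    · exact fun t _ => ((hd t).continuousAt).continuousWithinAt
    · exact fun t _ => ((hd t).differentiableAt).differentiableWithinAt
    · intro t ht
      rw [interior_Icc] at ht
      rw [(hd t).deriv]
      have hb : ⟪g (x + t • v) - g x, v⟫ ≤ L * t * ‖v‖ ^ 2 := by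
        calc ⟪g (x + t • v) - g x, v⟫ ≤ ‖g (x + t • v) - g x‖ * ‖v‖ := real_inner_le_norm _ _
          _ ≤ (L * ‖(x + t • v) - x‖) * ‖v‖ := by
              gcongr; exact hlip _ _
          _ = L * t * ‖v‖ ^ 2 := by
              simp [norm_smul, abs_of_pos ht.1]; ring
      rw [inner_sub_left] at hb
      linarith
  have h01 := hmono (by constructor <;> norm_num) (by constructor <;> norm_num) (by norm_num : (0:ℝ) ≤ 1)
  simp only [hψ, zero_smul, add_zero, one_smul, zero_mul, zero_pow, mul_zero, sub_zero,
    one_mul, one_pow, mul_one] at h01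
  have hxy : x + v = y := by rw [hv]; abel
  rw [hxy] at h01
  linarith

/-- one-sided cocoercivity bound -/
lemma aux_cocoercive {f : E → ℝ} {g : E → E} {L : ℝ} (hL : 0 < L)
    (hf : ConvexOn ℝ Set.univ f)
    (hgrad : ∀ x, HasGradientAt f (g x) x)
    (hlip : ∀ x y, ‖g x - g y‖ ≤ L * ‖x - y‖) (x y : E) :
    f x + ⟪g x, y - x⟫ + 1 / (2 * L) * ‖g y - g x‖ ^ 2 ≤ f y := by
  set z := y - (1 / L) • (g y - g x) with hz
  have h1 : f x + ⟪g x, z - x⟫ ≤ f z := aux_first_order hf (hgrad x) z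
  have h2 : f z ≤ f y + ⟪g y, z - y⟫ + L / 2 * ‖z - y‖ ^ 2 := aux_descent hL hgrad hlip y z
  have hzy : z - y = -((1 / L) • (g y - g x)) := by rw [hz]; abel
  have e1 : ⟪g x, z - x⟫ = ⟪g x, y - x⟫ - (1 / L) * ⟪g x, g y - g x⟫ := by
    rw [hz]
    rw [show y - (1 / L) • (g y - g x) - x = (y - x) - (1/L) • (g y - g x) by abel]
    rw [inner_sub_right, real_inner_smul_right]
  have e2 : ⟪g y, z - y⟫ = -((1 / L) * ⟪g y, g y - g x⟫) := by
    rw [hzy, inner_neg_right, real_inner_smul_right]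
  have e3 : ‖z - y‖ ^ 2 = (1 / L) ^ 2 * ‖g y - g x‖ ^ 2 := by
    rw [hzy, norm_neg, norm_smul, mul_pow, Real.norm_eq_abs, abs_of_pos (by positivity : (0:ℝ) < 1 / L)]
  have e4 : ⟪g y, g y - g x⟫ - ⟪g x, g y - g x⟫ = ‖g y - g x‖ ^ 2 := by
    rw [← inner_sub_left, real_inner_self_eq_norm_sq]
  have hL' : L ≠ 0 := ne_of_gt hL
  rw [e1] at h1; rw [e2, e3] at h2
  have key : f x + ⟪g x, y - x⟫ ≤ f y - (1 / L) * (⟪g y, g y - g x⟫ - ⟪g x, g y - g x⟫)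
      + L / 2 * ((1 / L) ^ 2 * ‖g y - g x‖ ^ 2) := by linarith
  rw [e4] at key
  have harith : L / 2 * ((1 / L) ^ 2 * ‖g y - g x‖ ^ 2) - (1 / L) * ‖g y - g x‖ ^ 2
      = -(1 / (2 * L) * ‖g y - g x‖ ^ 2) := by field_simp; ring
  linarith

lemma aux_grad_sub_sq {f : E → ℝ} {g : E → E} (μ : ℝ)
    (hgrad : ∀ x, HasGradientAt f (g x) x) (x : E) :
    HasGradientAt (fun x => f x - μ / 2 * ‖x‖ ^ 2) (g x - μ • x) x := by
  rw [hasGradientAt_iff_hasFDerivAt]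
  have h1 : HasFDerivAt (fun x : E => μ / 2 * ‖x‖ ^ 2)
      ((μ / 2) • (2 • (innerSL ℝ x))) x :=
    ((hasStrictFDerivAt_norm_sq x).hasFDerivAt).const_smul (μ / 2) |>.congr_fderiv rfl
  have h2 := ((hgrad x).hasFDerivAt).sub h1
  refine h2.congr_fderiv ?_
  ext y
  simp [InnerProductSpace.toDual_apply_apply, inner_sub_left, real_inner_smul_left]
  ring

lemma aux_strong_mono {f : E → ℝ} {g : E → E} {μ : ℝ}
    (hconv : ConvexOn ℝ Set.univ (fun x => f x - μ / 2 * ‖x‖ ^ 2))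
    (hgrad : ∀ x, HasGradientAt f (g x) x) (a b : E) :
    μ * ‖a - b‖ ^ 2 ≤ ⟪g a - g b, a - b⟫ := by
  have h1 := aux_first_order hconv (aux_grad_sub_sq μ hgrad a) b
  have h2 := aux_first_order hconv (aux_grad_sub_sq μ hgrad b) a
  have e1 : ⟪g a - μ • a, b - a⟫ = ⟪g a, b - a⟫ - μ * ⟪a, b - a⟫ := by
    rw [inner_sub_left, real_inner_smul_left]
  have e2 : ⟪g b - μ • b, a - b⟫ = ⟪g b, a - b⟫ - μ * ⟪b, a - b⟫ := by
    rw [inner_sub_left, real_inner_smul_left]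
  have e3 : ⟪g a - g b, a - b⟫ = -(⟪g a, b - a⟫ + ⟪g b, a - b⟫) := by
    rw [inner_sub_left]
    rw [show a - b = -(b - a) by abel, inner_neg_right, inner_neg_right]
    ring
  have e4 : ⟪a, b - a⟫ + ⟪b, a - b⟫ = -‖a - b‖ ^ 2 := by
    have h5 : ⟪a - b, a - b⟫ = ‖a - b‖ ^ 2 := real_inner_self_eq_norm_sq _
    rw [inner_sub_left] at h5
    rw [show b - a = -(a - b) by abel, inner_neg_right]
    linarith
  rw [e1] at h1; rw [e2] at h2
  rw [e3]
  have e5 : μ * ⟪a, b - a⟫ + μ * ⟪b, a - b⟫ = -(μ * ‖a - b‖ ^ 2) := by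
    rw [← mul_add, e4]; ring
  linarith

/-- For a `μ`-strongly convex, `L`-smooth `f`, with
`c(x) = argmin_c (f(c) + ⟨x,c⟩)`: (i) `⟨c(x₁) − c(x₂), x₂ − x₁⟩ ≥
(1/L)‖x₁ − x₂‖²`, and (ii) `‖c(x₁) − c(x₂)‖ ≤ (1/μ)‖x₁ − x₂‖`. -/
theorem argmin_map_cocoercive_and_lipschitz {n : ℕ}
    (f : EuclideanSpace ℝ (Fin n) → ℝ)
    (g : EuclideanSpace ℝ (Fin n) → EuclideanSpace ℝ (Fin n))
    (μ L : ℝ) (hμ : 0 < μ) (hμL : μ ≤ L)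
    (hconv : ConvexOn ℝ Set.univ (fun x => f x - μ / 2 * ‖x‖ ^ 2))
    (hgrad : ∀ x, HasGradientAt f (g x) x)
    (hlip : ∀ x y, ‖g x - g y‖ ≤ L * ‖x - y‖)
    (c : EuclideanSpace ℝ (Fin n) → EuclideanSpace ℝ (Fin n))
    (hc : ∀ x y, f (c x) + ⟪x, c x⟫ ≤ f y + ⟪x, y⟫) :
    (∀ x₁ x₂, (1 / L) * ‖x₁ - x₂‖ ^ 2 ≤ ⟪c x₁ - c x₂, x₂ - x₁⟫) ∧
    (∀ x₁ x₂, ‖c x₁ - c x₂‖ ≤ (1 / μ) * ‖x₁ - x₂‖) := by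
  have hL : 0 < L := lt_of_lt_of_le hμ hμL
  -- f is convex
  have hfconv : ConvexOn ℝ Set.univ f := by
    have hs : StrongConvexOn Set.univ μ f := strongConvexOn_iff_convex.mpr hconv
    exact hs.convexOn fun r => by positivity
  -- the gradient at the argmin is -x
  have hgc : ∀ x, g (c x) = -x := by
    intro x
    have hF : HasFDerivAt (fun y => f y + ⟪x, y⟫)
        (InnerProductSpace.toDual ℝ _ (g (c x) + x)) (c x) := by
      have h1 := (hgrad (c x)).hasFDerivAt
      have h2 : HasFDerivAt (fun y : EuclideanSpace ℝ (Fin n) => ⟪x, y⟫)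
          (InnerProductSpace.toDual ℝ _ x) (c x) :=
        (InnerProductSpace.toDual ℝ (EuclideanSpace ℝ (Fin n)) x).hasFDerivAt
      refine (h1.add h2).congr_fderiv ?_
      ext y
      simp [InnerProductSpace.toDual_apply_apply, inner_add_left]
    have hmin : IsLocalMin (fun y => f y + ⟪x, y⟫) (c x) :=
      Filter.Eventually.of_forall (fun y => hc x y)
    have h0 := hmin.hasFDerivAt_eq_zero hF
    have h1 : g (c x) + x = 0 :=
      (InnerProductSpace.toDual ℝ (EuclideanSpace ℝ (Fin n))).injective
        (by simpa using h0)
    exact eq_neg_of_add_eq_zero_left h1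
  constructor
  · -- co-coercivity
    intro x₁ x₂
    have h1 := aux_cocoercive hL hfconv hgrad hlip (c x₁) (c x₂)
    have h2 := aux_cocoercive hL hfconv hgrad hlip (c x₂) (c x₁)
    have hΔ1 : g (c x₂) - g (c x₁) = x₁ - x₂ := by rw [hgc, hgc]; abel
    have hΔ2 : g (c x₁) - g (c x₂) = x₂ - x₁ := by rw [hgc, hgc]; abel
    rw [hΔ1] at h1; rw [hΔ2] at h2
    simp only [hgc] at h1 h2
    have e1 : ⟪-x₁, c x₂ - c x₁⟫ + ⟪-x₂, c x₁ - c x₂⟫ = -⟪c x₁ - c x₂, x₂ - x₁⟫ := by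
      simp only [inner_neg_left, inner_sub_left, inner_sub_right]
      rw [real_inner_comm (c x₁) x₂, real_inner_comm (c x₁) x₁, real_inner_comm (c x₂) x₂,
        real_inner_comm (c x₂) x₁]
      ring
    have e2 : ‖x₂ - x₁‖ = ‖x₁ - x₂‖ := norm_sub_rev _ _
    rw [e2] at h2
    have hsum : (1 / (2 * L)) * ‖x₁ - x₂‖ ^ 2 + (1 / (2 * L)) * ‖x₁ - x₂‖ ^ 2
        = (1 / L) * ‖x₁ - x₂‖ ^ 2 := by
      field_simp
      ring
    linarith [h1, h2]
  · -- Lipschitz bound on the argmin map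
    intro x₁ x₂
    have hm := aux_strong_mono hconv hgrad (c x₁) (c x₂)
    have hΔ : g (c x₁) - g (c x₂) = x₂ - x₁ := by rw [hgc, hgc]; abel
    rw [hΔ] at hm
    have hcs : ⟪x₂ - x₁, c x₁ - c x₂⟫ ≤ ‖x₂ - x₁‖ * ‖c x₁ - c x₂‖ := real_inner_le_norm _ _
    rw [norm_sub_rev x₂ x₁] at hcs
    have hnn : (0:ℝ) ≤ ‖c x₁ - c x₂‖ := norm_nonneg _
    rcases hnn.eq_or_lt with h0 | hpos
    · rw [← h0]
      positivity
    · have h1 : μ * ‖c x₁ - c x₂‖ ≤ ‖x₁ - x₂‖ := by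
        have := mul_le_mul_of_nonneg_right (le_refl (1:ℝ)) hnn
        nlinarith [hm, hcs]
      have h2 : ‖c x₁ - c x₂‖ ≤ ‖x₁ - x₂‖ / μ := (le_div_iff₀ hμ).mpr (by linarith)
      have h3 : (1 / μ) * ‖x₁ - x₂‖ = ‖x₁ - x₂‖ / μ := by ring
      linarith
end

section
/- Let f : ℝ^n → ℝ be differentiable, μ-strongly convex, with L-Lipschitz gradient (0 < μ ≤ L), and for x ∈ ℝ^n let c(x) be the unique minimizer of c ↦ f(c) + ⟨x, c⟩. Let A be a nonzero real r×n matrix, let λ⁺ > 0 be the smallest nonzero eigenvalue of AAᵀ and λ_max the largest eigenvalue of AAᵀ, and define G : ℝ^r → ℝ^r by G(v) := A c(Aᵀ v). Then: (i) for all v₁, v₂ ∈ Im(A), ⟨G(v₂) − G(v₁), v₁ − v₂⟩ ≥ (λ⁺/L) ‖v₁ − v₂‖₂²; and (ii) for all v₁, v₂ ∈ ℝ^r, ‖G(v₁) − G(v₂)‖₂ ≤ (λ_max/μ) ‖v₁ − v₂‖₂. In other words, the dual function D(v) := min_c (f(c) + ⟨v, A c⟩), whose gradient is ∇D(v) = A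 c(Aᵀ v), is (λ⁺/L)-strongly concave on Im(A) and (λ_max/μ)-smooth. -/
open Matrix
open scoped RealInnerProductSpace

section GradAux
variable {E : Type*} [NormedAddCommGroup E] [InnerProductSpace ℝ E] [CompleteSpace E]

lemma hasGradientAt_of_innerSL {f : E → ℝ} {v x : E}
    (h : HasFDerivAt f (innerSL ℝ v) x) : HasGradientAt f v x := by
  rw [hasGradientAt_iff_hasFDerivAt]
  have hd : (InnerProductSpace.toDual ℝ E) v = innerSL ℝ v := by
    ext y; simp
  rw [hd]; exact h

lemma hasGradientAt_inner_const (w x : E) :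
    HasGradientAt (fun y => ⟪w, y⟫) w x := by
  exact hasGradientAt_of_innerSL ((innerSL ℝ w).hasFDerivAt)

lemma HasGradientAt.add' {f₁ f₂ : E → ℝ} {v₁ v₂ x : E}
    (h₁ : HasGradientAt f₁ v₁ x) (h₂ : HasGradientAt f₂ v₂ x) :
    HasGradientAt (fun z => f₁ z + f₂ z) (v₁ + v₂) x := by
  rw [hasGradientAt_iff_hasFDerivAt] at *
  rw [map_add]; exact h₁.add h₂

lemma HasGradientAt.sub' {f₁ f₂ : E → ℝ} {v₁ v₂ x : E}
    (h₁ : HasGradientAt f₁ v₁ x) (h₂ : HasGradientAt f₂ v₂ x) :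
    HasGradientAt (fun z => f₁ z - f₂ z) (v₁ - v₂) x := by
  rw [hasGradientAt_iff_hasFDerivAt] at *
  rw [map_sub]; exact h₁.sub h₂

lemma hasGradientAt_half_normsq (μ : ℝ) (x : E) :
    HasGradientAt (fun y => μ / 2 * ‖y‖ ^ 2) (μ • x) x := by
  apply hasGradientAt_of_innerSL
  have h := ((hasStrictFDerivAt_norm_sq x).hasFDerivAt).const_smul (μ / 2)
  refine HasFDerivAt.congr_fderiv h ?_
  ext y
  simp [real_inner_smul_left, two_smul]
  ring


lemma convex_first_order {φ : E → ℝ} {Gφ : E → E}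
    (hconv : ConvexOn ℝ Set.univ φ) (hgrad : ∀ z, HasGradientAt φ (Gφ z) z)
    (x y : E) : φ x + ⟪Gφ x, y - x⟫ ≤ φ y := by
  set γ : ℝ → E := fun t => x + t • (y - x) with hγ
  have hψconv : ConvexOn ℝ Set.univ (φ ∘ γ) := by
    have := hconv.comp_affineMap (AffineMap.lineMap x y : ℝ →ᵃ[ℝ] E)
    have heq : φ ∘ (AffineMap.lineMap x y : ℝ →ᵃ[ℝ] E) = φ ∘ γ := by
      funext t
      simp only [Function.comp_apply, AffineMap.lineMap_apply_module', hγ]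
      congr 1
      abel
    rw [heq] at this
    simpa using this
  have hγd : ∀ t : ℝ, HasDerivAt γ (y - x) t := by
    intro t
    simpa [hγ] using ((hasDerivAt_id t).smul_const (y - x)).const_add x
  have hψd : ∀ t : ℝ, HasDerivAt (φ ∘ γ) ⟪Gφ (γ t), y - x⟫ t := by
    intro t
    have hf := (hasGradientAt_iff_hasFDerivAt.mp (hgrad (γ t)))
    have := hf.comp_hasDerivAt t (hγd t)
    simpa using this
  have h01 : (0 : ℝ) < 1 := zero_lt_one
  have hkey := hψconv.le_slope_of_hasDerivAt (Set.mem_univ 0) (Set.mem_univ 1) h01 (by simpa [hγ] using hψd 0)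
  rw [slope_def_field] at hkey
  have hγ0 : γ 0 = x := by simp [hγ]
  have hγ1 : γ 1 = y := by simp [hγ]
  simp only [Function.comp_apply, hγ0, hγ1] at hkey
  have : ⟪Gφ x, y - x⟫ ≤ φ y - φ x := by
    simpa using hkey
  linarith


lemma strong_mono {f : E → ℝ} {g : E → E} {μ : ℝ}
    (hconv : ConvexOn ℝ Set.univ (fun x => f x - μ / 2 * ‖x‖ ^ 2))
    (hgrad : ∀ z, HasGradientAt f (g z) z) (x y : E) :
    μ * ‖x - y‖ ^ 2 ≤ ⟪g x - g y, x - y⟫ := by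
  have hφ : ∀ z, HasGradientAt (fun w => f w - μ / 2 * ‖w‖ ^ 2)
      ((fun z => g z - μ • z) z) z :=
    fun z => (hgrad z).sub' (hasGradientAt_half_normsq μ z)
  have h1 := convex_first_order hconv hφ x y
  have h2 := convex_first_order hconv hφ y x
  have hcomm : ⟪y, x⟫ = ⟪x, y⟫ := real_inner_comm x y
  have hn : ‖x - y‖ ^ 2 = ⟪x, x⟫ - ⟪x, y⟫ - ⟪y, x⟫ + ⟪y, y⟫ := by
    rw [← real_inner_self_eq_norm_sq]
    simp only [inner_sub_left, inner_sub_right]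
    ring
  simp only [inner_sub_left, inner_sub_right, real_inner_smul_left] at h1 h2 ⊢
  rw [hn]
  nlinarith [h1, h2, hcomm]

lemma first_order_f {f : E → ℝ} {g : E → E} {μ : ℝ} (hμ : 0 ≤ μ)
    (hconv : ConvexOn ℝ Set.univ (fun x => f x - μ / 2 * ‖x‖ ^ 2))
    (hgrad : ∀ z, HasGradientAt f (g z) z) (x y : E) :
    f x + ⟪g x, y - x⟫ ≤ f y := by
  have hφ : ∀ z, HasGradientAt (fun w => f w - μ / 2 * ‖w‖ ^ 2)
      ((fun z => g z - μ • z) z) z :=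
    fun z => (hgrad z).sub' (hasGradientAt_half_normsq μ z)
  have h1 := convex_first_order hconv hφ x y
  have hnn : (0:ℝ) ≤ μ / 2 * ‖y - x‖ ^ 2 := by positivity
  have hn : ‖y - x‖ ^ 2 = ⟪y, y⟫ - ⟪y, x⟫ - ⟪x, y⟫ + ⟪x, x⟫ := by
    rw [← real_inner_self_eq_norm_sq]
    simp only [inner_sub_left, inner_sub_right]
    ring
  have hnx : ‖x‖ ^ 2 = ⟪x, x⟫ := (real_inner_self_eq_norm_sq x).symm
  have hny : ‖y‖ ^ 2 = ⟪y, y⟫ := (real_inner_self_eq_norm_sq y).symm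
  have hcomm : ⟪y, x⟫ = ⟪x, y⟫ := real_inner_comm x y
  rw [hn] at hnn
  simp only [inner_sub_left, inner_sub_right, real_inner_smul_left] at h1 ⊢
  rw [hnx, hny] at h1
  nlinarith [h1, hnn, hcomm]

lemma descent_lemma {f : E → ℝ} {g : E → E} {L : ℝ} (hL : 0 < L)
    (hgrad : ∀ z, HasGradientAt f (g z) z)
    (hlip : ∀ x y, ‖g x - g y‖ ≤ L * ‖x - y‖) (x y : E) :
    f y ≤ f x + ⟪g x, y - x⟫ + L / 2 * ‖y - x‖ ^ 2 := by
  set γ : ℝ → E := fun t => x + t • (y - x) with hγ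
  set q : ℝ → ℝ := fun t => f (γ t) - t * ⟪g x, y - x⟫ - L * t ^ 2 / 2 * ‖y - x‖ ^ 2 with hq
  have hγd : ∀ t : ℝ, HasDerivAt γ (y - x) t := fun t => by
    simpa [hγ] using ((hasDerivAt_id t).smul_const (y - x)).const_add x
  have hqd : ∀ t : ℝ,
      HasDerivAt q (⟪g (γ t), y - x⟫ - ⟪g x, y - x⟫ - L * t * ‖y - x‖ ^ 2) t := by
    intro t
    have h1 : HasDerivAt (fun s => f (γ s)) ⟪g (γ t), y - x⟫ t := by
      have hf := hasGradientAt_iff_hasFDerivAt.mp (hgrad (γ t))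
      exact hf.comp_hasDerivAt t (hγd t)
    have h2 : HasDerivAt (fun s : ℝ => s * ⟪g x, y - x⟫) ⟪g x, y - x⟫ t := by
      simpa using (hasDerivAt_id t).mul_const (⟪g x, y - x⟫ : ℝ)
    have h3 : HasDerivAt (fun s : ℝ => L * s ^ 2 / 2 * ‖y - x‖ ^ 2)
        (L * t * ‖y - x‖ ^ 2) t := by
      have h := (((hasDerivAt_pow 2 t).const_mul L).div_const 2).mul_const (‖y - x‖ ^ 2)
      refine h.congr_deriv ?_
      ring
    exact (h1.sub h2).sub h3
  have hanti : AntitoneOn q (Set.Icc 0 1) := by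
    apply antitoneOn_of_deriv_nonpos (convex_Icc 0 1)
    · exact fun t _ => ((hqd t).differentiableAt.continuousAt).continuousWithinAt
    · exact fun t _ => (hqd t).differentiableAt.differentiableWithinAt
    · intro t ht
      rw [interior_Icc] at ht
      rw [(hqd t).deriv]
      have hsub : ⟪g (γ t), y - x⟫ - ⟪g x, y - x⟫ = ⟪g (γ t) - g x, y - x⟫ := by
        rw [inner_sub_left]
      have hbd : ⟪g (γ t) - g x, y - x⟫ ≤ L * t * ‖y - x‖ ^ 2 := by
        calc ⟪g (γ t) - g x, y - x⟫ ≤ ‖g (γ t) - g x‖ * ‖y - x‖ := real_inner_le_norm _ _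
          _ ≤ (L * ‖γ t - x‖) * ‖y - x‖ := by
              have := hlip (γ t) x
              nlinarith [norm_nonneg (y - x)]
          _ = L * t * ‖y - x‖ ^ 2 := by
              have : γ t - x = t • (y - x) := by simp [hγ]
              rw [this, norm_smul, Real.norm_eq_abs, abs_of_pos ht.1]
              ring
      linarith [hsub ▸ hbd]
  have hq1 : q 1 ≤ q 0 := hanti (Set.left_mem_Icc.mpr zero_le_one)
    (Set.right_mem_Icc.mpr zero_le_one) zero_le_one
  have hγ0 : γ 0 = x := by simp [hγ]
  have hγ1 : γ 1 = y := by simp [hγ]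
  simp only [hq, hγ0, hγ1, one_pow, mul_one, one_mul, zero_pow, mul_zero, zero_mul,
    sub_zero] at hq1
  linarith [hq1]


lemma grad_argmin {f : E → ℝ} {g : E → E}
    (hgrad : ∀ z, HasGradientAt f (g z) z)
    {c : E → E} (hc : ∀ x y, f (c x) + ⟪x, c x⟫ ≤ f y + ⟪x, y⟫) (x : E) :
    g (c x) = -x := by
  have hF : HasGradientAt (fun y => f y + ⟪x, y⟫) (g (c x) + x) (c x) :=
    (hgrad (c x)).add' (hasGradientAt_inner_const x (c x))
  have hmin : IsLocalMin (fun y => f y + ⟪x, y⟫) (c x) :=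
    Filter.Eventually.of_forall (hc x)
  have h0 := hmin.hasFDerivAt_eq_zero (hasGradientAt_iff_hasFDerivAt.mp hF)
  have : (InnerProductSpace.toDual ℝ E) (g (c x) + x) = 0 := h0
  have hz : g (c x) + x = 0 := by
    have := congrArg (InnerProductSpace.toDual ℝ E).symm this
    simpa using this
  exact eq_neg_of_add_eq_zero_left hz

lemma cocoercive_aux {f : E → ℝ} {g : E → E} {μ L : ℝ} (hμ : 0 ≤ μ) (hL : 0 < L)
    (hconv : ConvexOn ℝ Set.univ (fun x => f x - μ / 2 * ‖x‖ ^ 2))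
    (hgrad : ∀ z, HasGradientAt f (g z) z)
    (hlip : ∀ x y, ‖g x - g y‖ ≤ L * ‖x - y‖) (a b : E) :
    f a + ⟪g a, b - a⟫ + 1 / (2 * L) * ‖g b - g a‖ ^ 2 ≤ f b := by
  set d : E := g b - g a with hd
  set z : E := b - L⁻¹ • d with hz
  have h1 : f z ≤ f b + ⟪g b, z - b⟫ + L / 2 * ‖z - b‖ ^ 2 := descent_lemma hL hgrad hlip b z
  have h2 : f a + ⟪g a, z - a⟫ ≤ f z := first_order_f hμ hconv hgrad a z
  have hzb : z - b = -(L⁻¹ • d) := by rw [hz]; abel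
  have e1 : ⟪g b, z - b⟫ = -(L⁻¹ * ⟪g b, d⟫) := by
    rw [hzb, inner_neg_right, real_inner_smul_right]
  have e2 : ‖z - b‖ ^ 2 = L⁻¹ ^ 2 * ‖d‖ ^ 2 := by
    rw [hzb, norm_neg, norm_smul, Real.norm_eq_abs, abs_of_pos (inv_pos.mpr hL)]
    ring
  have hza : z - a = (b - a) - L⁻¹ • d := by rw [hz]; abel
  have e3 : ⟪g a, z - a⟫ = ⟪g a, b - a⟫ - L⁻¹ * ⟪g a, d⟫ := by
    rw [hza, inner_sub_right, real_inner_smul_right]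
  have e4 : ⟪g b, d⟫ - ⟪g a, d⟫ = ‖d‖ ^ 2 := by
    rw [← inner_sub_left, ← hd, real_inner_self_eq_norm_sq]
  rw [e1, e2] at h1
  rw [e3] at h2
  have harith : L / 2 * (L⁻¹ ^ 2 * ‖d‖ ^ 2) = 1 / (2 * L) * ‖d‖ ^ 2 := by
    field_simp
  have hinv : L⁻¹ * ‖d‖ ^ 2 = 1 / (2 * L) * ‖d‖ ^ 2 + 1 / (2 * L) * ‖d‖ ^ 2 := by
    field_simp
    ring
  have e5 : L⁻¹ * ⟪g b, d⟫ - L⁻¹ * ⟪g a, d⟫ = L⁻¹ * ‖d‖ ^ 2 := by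
    rw [← mul_sub, e4]
  linarith [h1, h2, e5, hinv, harith]

lemma cocoercive {f : E → ℝ} {g : E → E} {μ L : ℝ} (hμ : 0 ≤ μ) (hL : 0 < L)
    (hconv : ConvexOn ℝ Set.univ (fun x => f x - μ / 2 * ‖x‖ ^ 2))
    (hgrad : ∀ z, HasGradientAt f (g z) z)
    (hlip : ∀ x y, ‖g x - g y‖ ≤ L * ‖x - y‖) (a b : E) :
    1 / L * ‖g a - g b‖ ^ 2 ≤ ⟪g a - g b, a - b⟫ := by
  have h1 := cocoercive_aux hμ hL hconv hgrad hlip a b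
  have h2 := cocoercive_aux hμ hL hconv hgrad hlip b a
  have hn : ‖g b - g a‖ = ‖g a - g b‖ := norm_sub_rev _ _
  rw [hn] at h1
  have hgl : ⟪g a - g b, a - b⟫ = -⟪g a, b - a⟫ - ⟪g b, a - b⟫ := by
    have : a - b = -(b - a) := by abel
    rw [inner_sub_left, this, inner_neg_right, inner_neg_right]
  rw [hgl]
  have hhalf : 1 / (2 * L) * ‖g a - g b‖ ^ 2 + 1 / (2 * L) * ‖g a - g b‖ ^ 2
      = 1 / L * ‖g a - g b‖ ^ 2 := by
    field_simp
    ring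
  linarith [h1, h2, hhalf]

end GradAux

section SpecAux
variable {m : ℕ}

lemma sym_quad_le {T : EuclideanSpace ℝ (Fin m) →ₗ[ℝ] EuclideanSpace ℝ (Fin m)}
    (hT : T.IsSymmetric) {M : ℝ}
    (hM : ∀ t : ℝ, Module.End.HasEigenvalue T t → t ≤ M)
    (u : EuclideanSpace ℝ (Fin m)) : ⟪T u, u⟫ ≤ M * ‖u‖ ^ 2 := by
  have hn : Module.finrank ℝ (EuclideanSpace ℝ (Fin m)) = m := finrank_euclideanSpace_fin
  set b := hT.eigenvectorBasis hn with hbdef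
  set lam := hT.eigenvalues hn with hlamdef
  have hb : ∀ i, T (b i) = lam i • b i := fun i => by
    exact_mod_cast hT.apply_eigenvectorBasis hn i
  have hTu : ⟪T u, u⟫ = ∑ i, lam i * ⟪b i, u⟫ ^ 2 := by
    calc ⟪T u, u⟫ = ⟪u, T u⟫ := real_inner_comm _ _
      _ = ∑ i, ⟪u, b i⟫ * ⟪b i, T u⟫ := (b.sum_inner_mul_inner u (T u)).symm
      _ = ∑ i, lam i * ⟪b i, u⟫ ^ 2 := Finset.sum_congr rfl fun i _ => by
          rw [← hT (b i) u, hb i, real_inner_smul_left, real_inner_comm u (b i)]; ring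
  have hu : ‖u‖ ^ 2 = ∑ i, ⟪b i, u⟫ ^ 2 := by
    calc ‖u‖ ^ 2 = ⟪u, u⟫ := (real_inner_self_eq_norm_sq u).symm
      _ = ∑ i, ⟪u, b i⟫ * ⟪b i, u⟫ := (b.sum_inner_mul_inner u u).symm
      _ = ∑ i, ⟪b i, u⟫ ^ 2 := Finset.sum_congr rfl fun i _ => by
          rw [real_inner_comm u (b i)]; ring
  rw [hTu, hu, Finset.mul_sum]
  apply Finset.sum_le_sum
  intro i _
  exact mul_le_mul_of_nonneg_right (hM _ (hT.hasEigenvalue_eigenvalues hn i)) (sq_nonneg _)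

lemma sym_quad_ge {T : EuclideanSpace ℝ (Fin m) →ₗ[ℝ] EuclideanSpace ℝ (Fin m)}
    (hT : T.IsSymmetric) {lam0 : ℝ} (h0 : 0 ≤ lam0)
    (hmin : ∀ t : ℝ, t ≠ 0 → Module.End.HasEigenvalue T t → lam0 ≤ t)
    {u : EuclideanSpace ℝ (Fin m)} (hu : ∀ z, T z = 0 → ⟪z, u⟫ = 0) :
    lam0 * ‖u‖ ^ 2 ≤ ⟪T u, u⟫ := by
  have hn : Module.finrank ℝ (EuclideanSpace ℝ (Fin m)) = m := finrank_euclideanSpace_fin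
  set b := hT.eigenvectorBasis hn with hbdef
  set lam := hT.eigenvalues hn with hlamdef
  have hb : ∀ i, T (b i) = lam i • b i := fun i => by
    exact_mod_cast hT.apply_eigenvectorBasis hn i
  have hTu : ⟪T u, u⟫ = ∑ i, lam i * ⟪b i, u⟫ ^ 2 := by
    calc ⟪T u, u⟫ = ⟪u, T u⟫ := real_inner_comm _ _
      _ = ∑ i, ⟪u, b i⟫ * ⟪b i, T u⟫ := (b.sum_inner_mul_inner u (T u)).symm
      _ = ∑ i, lam i * ⟪b i, u⟫ ^ 2 := Finset.sum_congr rfl fun i _ => by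
          rw [← hT (b i) u, hb i, real_inner_smul_left, real_inner_comm u (b i)]; ring
  have hnu : ‖u‖ ^ 2 = ∑ i, ⟪b i, u⟫ ^ 2 := by
    calc ‖u‖ ^ 2 = ⟪u, u⟫ := (real_inner_self_eq_norm_sq u).symm
      _ = ∑ i, ⟪u, b i⟫ * ⟪b i, u⟫ := (b.sum_inner_mul_inner u u).symm
      _ = ∑ i, ⟪b i, u⟫ ^ 2 := Finset.sum_congr rfl fun i _ => by
          rw [real_inner_comm u (b i)]; ring
  rw [hTu, hnu, Finset.mul_sum]
  apply Finset.sum_le_sum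
  intro i _
  by_cases h : lam i = 0
  · have hker : T (b i) = 0 := by rw [hb i, h, zero_smul]
    rw [hu (b i) hker]
    simp
  · exact mul_le_mul_of_nonneg_right (hmin _ h (hT.hasEigenvalue_eigenvalues hn i)) (sq_nonneg _)

end SpecAux

section MatAux
variable {r n : ℕ} (A : Matrix (Fin r) (Fin n) ℝ)

lemma AAt_isSymmetric : (Matrix.toEuclideanLin (A * Aᵀ)).IsSymmetric := by
  rw [← Matrix.isHermitian_iff_isSymmetric]
  rw [Matrix.IsHermitian, Matrix.conjTranspose_eq_transpose_of_trivial,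
    Matrix.transpose_mul, Matrix.transpose_transpose]

lemma euclid_adjoint (x : EuclideanSpace ℝ (Fin n)) (y : EuclideanSpace ℝ (Fin r)) :
    ⟪Matrix.toEuclideanLin A x, y⟫ = ⟪x, Matrix.toEuclideanLin Aᵀ y⟫ := by
  have h : Matrix.toEuclideanLin Aᵀ = LinearMap.adjoint (Matrix.toEuclideanLin A) := by
    rw [← Matrix.toEuclideanLin_conjTranspose_eq_adjoint,
      Matrix.conjTranspose_eq_transpose_of_trivial]
  rw [h, LinearMap.adjoint_inner_right]

lemma AAt_apply (v : EuclideanSpace ℝ (Fin r)) :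
    Matrix.toEuclideanLin (A * Aᵀ) v
      = Matrix.toEuclideanLin A (Matrix.toEuclideanLin Aᵀ v) := by
  have h : Matrix.toEuclideanLin (A * Aᵀ)
      = (Matrix.toEuclideanLin A).comp (Matrix.toEuclideanLin Aᵀ) := by
    simp only [Matrix.toEuclideanLin_eq_toLin]
    exact Matrix.toLin_mul _ (PiLp.basisFun 2 ℝ (Fin n)) _ A Aᵀ
  rw [h]; rfl

end MatAux

/-- For a `μ`-strongly convex, `L`-smooth `f` with argmin map
`c(x) = argmin_c (f(c) + ⟨x,c⟩)`, and a nonzero `r×n` matrix `A` with `λ⁺` the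
smallest nonzero eigenvalue and `λ_max` the largest eigenvalue of `AAᵀ`, the map
`G(v) = A c(Aᵀv)` (the gradient of the dual function) satisfies:
(i) `⟨G(v₂) − G(v₁), v₁ − v₂⟩ ≥ (λ⁺/L)‖v₁ − v₂‖²` on `Im(A)`, and
(ii) `‖G(v₁) − G(v₂)‖ ≤ (λ_max/μ)‖v₁ − v₂‖` everywhere; i.e. the dual function
is `(λ⁺/L)`-strongly concave on `Im(A)` and `(λ_max/μ)`-smooth. -/
theorem dual_function_strong_concavity_smoothness {r n : ℕ}
    (f : EuclideanSpace ℝ (Fin n) → ℝ)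
    (g : EuclideanSpace ℝ (Fin n) → EuclideanSpace ℝ (Fin n))
    (μ L : ℝ) (hμ : 0 < μ) (hμL : μ ≤ L)
    (hconv : ConvexOn ℝ Set.univ (fun x => f x - μ / 2 * ‖x‖ ^ 2))
    (hgrad : ∀ x, HasGradientAt f (g x) x)
    (hlip : ∀ x y, ‖g x - g y‖ ≤ L * ‖x - y‖)
    (c : EuclideanSpace ℝ (Fin n) → EuclideanSpace ℝ (Fin n))
    (hc : ∀ x y, f (c x) + ⟪x, c x⟫ ≤ f y + ⟪x, y⟫)
    (A : Matrix (Fin r) (Fin n) ℝ) (hA : A ≠ 0)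
    (lamPlus lamMax : ℝ)
    (hlp : Module.End.HasEigenvalue (Matrix.toEuclideanLin (A * Aᵀ)) lamPlus)
    (hlp_pos : 0 < lamPlus)
    (hlp_min : ∀ t : ℝ, t ≠ 0 →
      Module.End.HasEigenvalue (Matrix.toEuclideanLin (A * Aᵀ)) t → lamPlus ≤ t)
    (hlm : Module.End.HasEigenvalue (Matrix.toEuclideanLin (A * Aᵀ)) lamMax)
    (hlm_max : ∀ t : ℝ,
      Module.End.HasEigenvalue (Matrix.toEuclideanLin (A * Aᵀ)) t → t ≤ lamMax)
    (G : EuclideanSpace ℝ (Fin r) → EuclideanSpace ℝ (Fin r))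
    (hG : ∀ v, G v = Matrix.toEuclideanLin A (c (Matrix.toEuclideanLin Aᵀ v))) :
    (∀ v₁ ∈ LinearMap.range (Matrix.toEuclideanLin A),
      ∀ v₂ ∈ LinearMap.range (Matrix.toEuclideanLin A),
      (lamPlus / L) * ‖v₁ - v₂‖ ^ 2 ≤ ⟪G v₂ - G v₁, v₁ - v₂⟫) ∧
    (∀ v₁ v₂, ‖G v₁ - G v₂‖ ≤ (lamMax / μ) * ‖v₁ - v₂‖) := by
  have hL : (0:ℝ) < L := lt_of_lt_of_le hμ hμL
  have hμ0 : (0:ℝ) ≤ μ := hμ.le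
  have hsym := AAt_isSymmetric A
  have hlamMax_nonneg : 0 ≤ lamMax := le_trans hlp_pos.le (hlm_max lamPlus hlp)
  have hgc : ∀ x, g (c x) = -x := grad_argmin hgrad hc
  have key1 : ∀ v : EuclideanSpace ℝ (Fin r),
      ‖Matrix.toEuclideanLin Aᵀ v‖ ^ 2 ≤ lamMax * ‖v‖ ^ 2 := by
    intro v
    have h1 : ⟪Matrix.toEuclideanLin (A * Aᵀ) v, v⟫
        = ‖Matrix.toEuclideanLin Aᵀ v‖ ^ 2 := by
      rw [AAt_apply, euclid_adjoint, real_inner_self_eq_norm_sq]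
    have h2 := sym_quad_le hsym hlm_max v
    linarith [h1 ▸ h2]
  have key2 : ∀ u, u ∈ LinearMap.range (Matrix.toEuclideanLin A) →
      lamPlus * ‖u‖ ^ 2 ≤ ‖Matrix.toEuclideanLin Aᵀ u‖ ^ 2 := by
    intro u hu
    obtain ⟨w, rfl⟩ := hu
    have hker : ∀ z, Matrix.toEuclideanLin (A * Aᵀ) z = 0 →
        ⟪z, Matrix.toEuclideanLin A w⟫ = 0 := by
      intro z hz
      have h2 : ⟪Matrix.toEuclideanLin Aᵀ z, Matrix.toEuclideanLin Aᵀ z⟫ = (0:ℝ) := by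
        rw [← euclid_adjoint, ← AAt_apply, hz, inner_zero_left]
      have hAtz : Matrix.toEuclideanLin Aᵀ z = 0 := inner_self_eq_zero.mp h2
      rw [real_inner_comm, euclid_adjoint, hAtz, inner_zero_right]
    have h3 := sym_quad_ge hsym hlp_pos.le hlp_min hker
    have h1 : ⟪Matrix.toEuclideanLin (A * Aᵀ) (Matrix.toEuclideanLin A w),
        Matrix.toEuclideanLin A w⟫
        = ‖Matrix.toEuclideanLin Aᵀ (Matrix.toEuclideanLin A w)‖ ^ 2 := by
      rw [AAt_apply, euclid_adjoint, real_inner_self_eq_norm_sq]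
    linarith [h1 ▸ h3]
  have sqrt_key1 : ∀ v : EuclideanSpace ℝ (Fin r),
      ‖Matrix.toEuclideanLin Aᵀ v‖ ≤ Real.sqrt lamMax * ‖v‖ := by
    intro v
    calc ‖Matrix.toEuclideanLin Aᵀ v‖
        = Real.sqrt (‖Matrix.toEuclideanLin Aᵀ v‖ ^ 2) :=
          (Real.sqrt_sq (norm_nonneg _)).symm
      _ ≤ Real.sqrt (lamMax * ‖v‖ ^ 2) := Real.sqrt_le_sqrt (key1 v)
      _ = Real.sqrt lamMax * ‖v‖ := by
          rw [Real.sqrt_mul hlamMax_nonneg, Real.sqrt_sq (norm_nonneg _)]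
  have key3 : ∀ w : EuclideanSpace ℝ (Fin n),
      ‖Matrix.toEuclideanLin A w‖ ≤ Real.sqrt lamMax * ‖w‖ := by
    intro w
    rcases eq_or_lt_of_le (norm_nonneg (Matrix.toEuclideanLin A w)) with h0 | h0
    · rw [← h0]; positivity
    · have h1 : ‖Matrix.toEuclideanLin A w‖ ^ 2
          ≤ ‖w‖ * (Real.sqrt lamMax * ‖Matrix.toEuclideanLin A w‖) := by
        calc ‖Matrix.toEuclideanLin A w‖ ^ 2
            = ⟪Matrix.toEuclideanLin A w, Matrix.toEuclideanLin A w⟫ :=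
              (real_inner_self_eq_norm_sq _).symm
          _ = ⟪w, Matrix.toEuclideanLin Aᵀ (Matrix.toEuclideanLin A w)⟫ := by
              rw [real_inner_comm, euclid_adjoint, real_inner_comm]
          _ ≤ ‖w‖ * ‖Matrix.toEuclideanLin Aᵀ (Matrix.toEuclideanLin A w)‖ :=
              real_inner_le_norm _ _
          _ ≤ ‖w‖ * (Real.sqrt lamMax * ‖Matrix.toEuclideanLin A w‖) := by
              have := sqrt_key1 (Matrix.toEuclideanLin A w)
              nlinarith [norm_nonneg w]
      nlinarith [h1, h0]
  constructor
  · intro v₁ hv₁ v₂ hv₂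
    set x₁ := Matrix.toEuclideanLin Aᵀ v₁ with hx₁
    set x₂ := Matrix.toEuclideanLin Aᵀ v₂ with hx₂
    have hgdiff : g (c x₂) - g (c x₁) = x₁ - x₂ := by
      rw [hgc x₂, hgc x₁]; abel
    have hco := cocoercive hμ0 hL hconv hgrad hlip (c x₂) (c x₁)
    rw [hgdiff] at hco
    have hinner : ⟪G v₂ - G v₁, v₁ - v₂⟫ = ⟪x₁ - x₂, c x₂ - c x₁⟫ := by
      rw [hG v₂, hG v₁, ← hx₁, ← hx₂, ← map_sub, euclid_adjoint, map_sub, ← hx₁, ← hx₂,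
        real_inner_comm]
    have hmem : v₁ - v₂ ∈ LinearMap.range (Matrix.toEuclideanLin A) := sub_mem hv₁ hv₂
    have hk2 := key2 (v₁ - v₂) hmem
    have hxd : Matrix.toEuclideanLin Aᵀ (v₁ - v₂) = x₁ - x₂ := by
      rw [map_sub, ← hx₁, ← hx₂]
    rw [hxd] at hk2
    rw [hinner]
    calc lamPlus / L * ‖v₁ - v₂‖ ^ 2 = 1 / L * (lamPlus * ‖v₁ - v₂‖ ^ 2) := by ring
      _ ≤ 1 / L * ‖x₁ - x₂‖ ^ 2 := by
          apply mul_le_mul_of_nonneg_left hk2 (by positivity)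
      _ ≤ ⟪x₁ - x₂, c x₂ - c x₁⟫ := hco
  · intro v₁ v₂
    set x₁ := Matrix.toEuclideanLin Aᵀ v₁ with hx₁
    set x₂ := Matrix.toEuclideanLin Aᵀ v₂ with hx₂
    have hmono := strong_mono hconv hgrad (c x₁) (c x₂)
    have hgd : g (c x₁) - g (c x₂) = x₂ - x₁ := by
      rw [hgc x₁, hgc x₂]; abel
    rw [hgd] at hmono
    have hcs : ⟪x₂ - x₁, c x₁ - c x₂⟫ ≤ ‖x₂ - x₁‖ * ‖c x₁ - c x₂‖ := real_inner_le_norm _ _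
    have hcb : μ * ‖c x₁ - c x₂‖ ≤ ‖x₂ - x₁‖ := by
      rcases eq_or_lt_of_le (norm_nonneg (c x₁ - c x₂)) with h0 | h0
      · rw [← h0, mul_zero]; exact norm_nonneg _
      · nlinarith [hmono, hcs, h0]
    have hGd : G v₁ - G v₂ = Matrix.toEuclideanLin A (c x₁ - c x₂) := by
      rw [hG v₁, hG v₂, ← hx₁, ← hx₂, ← map_sub]
    have hxd : ‖x₂ - x₁‖ ≤ Real.sqrt lamMax * ‖v₁ - v₂‖ := by
      have h1 : x₂ - x₁ = Matrix.toEuclideanLin Aᵀ (v₂ - v₁) := by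
        rw [map_sub, ← hx₁, ← hx₂]
      rw [h1]
      have h2 := sqrt_key1 (v₂ - v₁)
      rwa [norm_sub_rev v₂ v₁] at h2
    calc ‖G v₁ - G v₂‖ = ‖Matrix.toEuclideanLin A (c x₁ - c x₂)‖ := by rw [hGd]
      _ ≤ Real.sqrt lamMax * ‖c x₁ - c x₂‖ := key3 _
      _ ≤ Real.sqrt lamMax * (‖x₂ - x₁‖ / μ) := by
          apply mul_le_mul_of_nonneg_left _ (Real.sqrt_nonneg _)
          rw [le_div_iff₀ hμ]
          linarith [hcb]
      _ ≤ Real.sqrt lamMax * (Real.sqrt lamMax * ‖v₁ - v₂‖ / μ) := by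
          apply mul_le_mul_of_nonneg_left _ (Real.sqrt_nonneg _)
          gcongr
      _ = Real.sqrt lamMax * Real.sqrt lamMax * ‖v₁ - v₂‖ / μ := by ring
      _ = lamMax / μ * ‖v₁ - v₂‖ := by
          rw [Real.mul_self_sqrt hlamMax_nonneg]; ring
end
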